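/- Let Idl be a distribution over m×n matrices X (with additional row variables Y_i over {0,1}^n) obtained by conditioning a column-independent distribution Unf on an event W, where Y_{i,j} indicates an event E_{i,j} with Unf[E_{i,j} | X_{≤i,j}] = δ_{i,j} ≥ δ for every fixing of X_{≤i,j}. Define ρ_{i,j}(x_{<i}) = Idl[E_{i,j}|X_{<i}=x_{<i}]/δ_{i,j} − 1. Then E_{Idl}[Σ_{i=1}^m Σ_{j=1}^n min{|ρ_{i,j}|, ρ_{i,j}²}] ≤ 4d/δ, where d = Σ_{i=1}^m D(Idl_{X_i Y_i} || Unf_{X_i Y_i} | Idl_{X_{<i}}). -/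

import Mathlib

open Finset

def IsDist {α : Type*} [Fintype α] (P : α → ℝ) : Prop :=
  (∀ x, 0 ≤ P x) ∧ ∑ x, P x = 1


lemma scalar_gibbs (a b c : ℝ) (ha : 0 ≤ a) (hb : 0 ≤ b) (hab : 0 < a → 0 < b) :
    a * c + a - b * Real.exp c ≤ a * Real.log (a / b) := by
  rcases eq_or_lt_of_le ha with h|h
  · simp only [← h]
    simp
    positivity
  · have hb' := hab h
    have h1 : Real.log (b * Real.exp c / a) ≤ b * Real.exp c / a - 1 :=
      Real.log_le_sub_one_of_pos (by positivity)
    have h2 : Real.log (b * Real.exp c / a) = Real.log b + c - Real.log a := by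
      rw [Real.log_div (by positivity) h.ne', Real.log_mul hb'.ne' (Real.exp_pos c).ne',
        Real.log_exp]
    have h3 : Real.log (a / b) = Real.log a - Real.log b := Real.log_div h.ne' hb'.ne'
    rw [h2, show b * Real.exp c / a - 1 = (b * Real.exp c - a) / a by field_simp] at h1
    have h4 : (Real.log b + c - Real.log a) * a ≤ b * Real.exp c - a := by
      have := (le_div_iff₀ h).mp h1
      linarith
    rw [h3]
    nlinarith [h4]

lemma exp_quadratic {u : ℝ} (h1 : |u| ≤ 1) : Real.exp u ≤ 1 + u + u ^ 2 := by
  have h := Real.exp_bound h1 (n := 3) (by norm_num)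
  have h2 : ∑ m ∈ Finset.range 3, u ^ m / m.factorial = 1 + u + u ^ 2 / 2 := by
    simp [Finset.sum_range_succ]
  rw [h2] at h
  have h3 : (((3:ℕ).succ : ℝ) / ((((3:ℕ).factorial : ℝ)) * ((3:ℕ):ℝ))) = 2 / 9 := by
    norm_num [Nat.factorial]
  rw [h3] at h
  have h4 : |u| ^ 3 ≤ |u| ^ 2 := pow_le_pow_of_le_one (abs_nonneg u) h1 (by norm_num)
  have h5 : |u| ^ 2 = u ^ 2 := sq_abs u
  have := abs_sub_le_iff.mp h
  nlinarith [this.1, sq_nonneg u]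

lemma scalar_core {ρ : ℝ} (hρ : -1 ≤ ρ) :
    min |ρ| (ρ ^ 2) / 4 ≤ (1 + ρ) * (min ρ 1 / 2) - (Real.exp (min ρ 1 / 2) - 1) := by
  rcases le_or_gt ρ 1 with h | h
  · have hmin : min ρ 1 = ρ := min_eq_left h
    have habs : |ρ| ≤ 1 := abs_le.mpr ⟨hρ, h⟩
    have hmin2 : min |ρ| (ρ ^ 2) = ρ ^ 2 := by
      apply min_eq_right
      calc ρ ^ 2 = |ρ| * |ρ| := by rw [← abs_mul, sq, abs_mul_self]
      _ ≤ 1 * |ρ| := by nlinarith [abs_nonneg ρ]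
      _ = |ρ| := one_mul _
    rw [hmin, hmin2]
    have h4 : |ρ / 2| ≤ 1 := by rw [abs_div]; simp [abs_le.mpr ⟨hρ, h⟩]; linarith [abs_le.mpr ⟨hρ, h⟩]
    have := exp_quadratic h4
    nlinarith [this]
  · have hmin : min ρ 1 = 1 := min_eq_right h.le
    have hmin2 : min |ρ| (ρ ^ 2) = |ρ| := by
      apply min_eq_left
      have : |ρ| = ρ := abs_of_pos (by linarith)
      nlinarith [this]
    rw [hmin, hmin2, abs_of_pos (by linarith : (0:ℝ) < ρ)]
    have he : Real.exp ((1:ℝ)/2) ≤ 7/4 := by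
      have h1 : Real.exp ((1:ℝ)/2) ^ 2 = Real.exp 1 := by
        rw [← Real.exp_nat_mul]
        norm_num
      nlinarith [Real.exp_one_lt_d9, Real.exp_pos ((1:ℝ)/2)]
    nlinarith

lemma scalar_main {q pp δ : ℝ} (hδ : 0 < δ) (hq : δ ≤ q) (hq1 : q ≤ 1) (hp : 0 ≤ pp) :
    δ * (min |pp / q - 1| ((pp / q - 1) ^ 2)) / 4 ≤
      pp * (min (pp / q - 1) 1 / 2) -
        Real.log (1 + q * (Real.exp (min (pp / q - 1) 1 / 2) - 1)) := by
  set ρ := pp / q - 1 with hρdef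
  set lam := min ρ 1 / 2 with hlam
  have hq0 : 0 < q := lt_of_lt_of_le hδ hq
  have hρ : -1 ≤ ρ := by
    rw [hρdef]
    have : 0 ≤ pp / q := div_nonneg hp hq0.le
    linarith
  have hppq : pp = (1 + ρ) * q := by
    rw [hρdef]
    field_simp
    ring
  have hpos : 0 < 1 + q * (Real.exp lam - 1) := by
    have h1 : 1 + q * (Real.exp lam - 1) = (1 - q) + q * Real.exp lam := by ring
    rw [h1]
    have := Real.exp_pos lam
    nlinarith
  have hlog : Real.log (1 + q * (Real.exp lam - 1)) ≤ q * (Real.exp lam - 1) := by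
    have := Real.log_le_sub_one_of_pos hpos
    linarith
  have hcore := scalar_core hρ
  have hmin0 : 0 ≤ min |ρ| (ρ ^ 2) := le_min (abs_nonneg ρ) (sq_nonneg ρ)
  have h2 : q * (min |ρ| (ρ ^ 2) / 4) ≤ q * ((1 + ρ) * lam - (Real.exp lam - 1)) :=
    mul_le_mul_of_nonneg_left hcore hq0.le
  calc δ * (min |ρ| (ρ ^ 2)) / 4 ≤ q * (min |ρ| (ρ ^ 2) / 4) := by nlinarith
  _ ≤ q * ((1 + ρ) * lam - (Real.exp lam - 1)) := h2
  _ = pp * lam - q * (Real.exp lam - 1) := by rw [hppq]; ring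
  _ ≤ pp * lam - Real.log (1 + q * (Real.exp lam - 1)) := by linarith

lemma dv_bound {β κ : Type*} [Fintype β] [Fintype κ] [DecidableEq κ]
    (p r f : β → ℝ) (hp : ∀ x, 0 ≤ p x) (hr : ∀ x, 0 ≤ r x)
    (habs : ∀ x, 0 < p x → 0 < r x) (K : β → κ)
    (hf : ∀ x y, K x = K y → f x = f y) :
    ∑ x, (p x * f x + p x - r x * Real.exp (f x)) ≤
      ∑ x, p x * Real.log ((∑ y ∈ univ.filter fun y => K y = K x, p y) /
        (∑ y ∈ univ.filter fun y => K y = K x, r y)) := by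
  rw [← Finset.sum_fiberwise univ K (fun x => p x * f x + p x - r x * Real.exp (f x)),
    ← Finset.sum_fiberwise univ K (fun x => p x * Real.log ((∑ y ∈ univ.filter fun y => K y = K x, p y) /
        (∑ y ∈ univ.filter fun y => K y = K x, r y)))]
  apply Finset.sum_le_sum
  intro k _
  rcases Finset.eq_empty_or_nonempty (univ.filter fun x => K x = k) with he | ⟨x₀, hx₀⟩
  · rw [he]; simp
  have hKx₀ : K x₀ = k := (Finset.mem_filter.mp hx₀).2
  -- constants
  set Pk := ∑ y ∈ univ.filter fun y => K y = k, p y with hPk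
  set Rk := ∑ y ∈ univ.filter fun y => K y = k, r y with hRk
  have hfc : ∀ x ∈ univ.filter fun x => K x = k, f x = f x₀ := by
    intro x hx
    exact hf x x₀ ((Finset.mem_filter.mp hx).2.trans hKx₀.symm)
  have hlhs : ∑ x ∈ univ.filter fun x => K x = k, (p x * f x + p x - r x * Real.exp (f x))
      = Pk * f x₀ + Pk - Rk * Real.exp (f x₀) := by
    rw [hPk, hRk, Finset.sum_mul, Finset.sum_mul]
    rw [← Finset.sum_add_distrib, ← Finset.sum_sub_distrib]
    apply Finset.sum_congr rfl
    intro x hx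
    rw [hfc x hx]
  have hrhs : ∀ x ∈ univ.filter fun x => K x = k,
      p x * Real.log ((∑ y ∈ univ.filter fun y => K y = K x, p y) /
        (∑ y ∈ univ.filter fun y => K y = K x, r y)) = p x * Real.log (Pk / Rk) := by
    intro x hx
    have : K x = k := (Finset.mem_filter.mp hx).2
    rw [this]
  rw [hlhs, Finset.sum_congr rfl hrhs, ← Finset.sum_mul]
  apply scalar_gibbs
  · exact Finset.sum_nonneg fun y _ => hp y
  · exact Finset.sum_nonneg fun y _ => hr y
  · intro hPk'
    obtain ⟨y, hy, hpy⟩ : ∃ y ∈ univ.filter fun y => K y = k, 0 < p y := by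
      by_contra hc
      push_neg at hc
      have : Pk ≤ 0 := Finset.sum_nonpos fun y hy => by
        rcases lt_or_eq_of_le (hp y) with h | h
        · exact absurd h (not_lt.mpr (hc y hy))
        · exact le_of_eq h.symm
      linarith
    calc (0:ℝ) < r y := habs y hpy
    _ ≤ Rk := Finset.single_le_sum (fun z _ => hr z) hy

lemma sum_prod_cols {α : Type*} [Fintype α] (m n : ℕ) (g : Fin n → (Fin m → α) → ℝ) :
    ∑ y : Fin m → Fin n → α, ∏ j, g j (fun i => y i j) = ∏ j, ∑ c, g j c := by
  classical
  rw [Finset.prod_univ_sum (fun _ => (univ : Finset (Fin m → α))) (fun j c => g j c)]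
  rw [Fintype.piFinset_univ]
  exact Fintype.sum_bijective (Function.swap : (Fin m → Fin n → α) → (Fin n → Fin m → α))
    ⟨fun a b hab => funext fun i => funext fun j => (congrFun (congrFun hab j) i),
      fun y => ⟨Function.swap y, rfl⟩⟩ _ _ (fun y => rfl)

lemma cond_lt {α : Type*} [Fintype α] [DecidableEq α] {m : ℕ} (i : Fin m)
    (Ecol : Finset (Fin m → α)) (colj : (Fin m → α) → ℝ) (q : ℝ)
    (hc : ∀ z : Fin m → α,
      ∑ c ∈ Ecol.filter (fun c => ∀ i' : Fin m, i' ≤ i → c i' = z i'), colj c =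
        q * ∑ c ∈ univ.filter (fun c : Fin m → α => ∀ i' : Fin m, i' ≤ i → c i' = z i'), colj c)
    (z : Fin m → α) :
    ∑ c ∈ Ecol.filter (fun c => ∀ i' : Fin m, i' < i → c i' = z i'), colj c =
      q * ∑ c ∈ univ.filter (fun c : Fin m → α => ∀ i' : Fin m, i' < i → c i' = z i'), colj c := by
  classical
  have key : ∀ (s : Finset (Fin m → α)),
      ∑ c ∈ s.filter (fun c => ∀ i' : Fin m, i' < i → c i' = z i'), colj c =
        ∑ a : α, ∑ c ∈ s.filter (fun c => ∀ i' : Fin m, i' ≤ i → c i' = Function.update z i a i'),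
          colj c := by
    intro s
    rw [← Finset.sum_fiberwise (s.filter (fun c => ∀ i' : Fin m, i' < i → c i' = z i'))
      (fun c => c i) colj]
    apply Finset.sum_congr rfl
    intro a _
    apply Finset.sum_congr _ (fun _ _ => rfl)
    ext c
    simp only [Finset.mem_filter]
    constructor
    · rintro ⟨⟨hcs, hlt⟩, hci⟩
      refine ⟨hcs, fun i' hi' => ?_⟩
      rcases lt_or_eq_of_le hi' with h | h
      · rw [Function.update_of_ne (ne_of_lt h) a z]
        exact hlt i' h
      · subst h
        rw [Function.update_self]
        exact hci
    · rintro ⟨hcs, hle⟩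
      have hci : c i = a := by
        have := hle i le_rfl
        rwa [Function.update_self] at this
      refine ⟨⟨hcs, fun i' hi' => ?_⟩, hci⟩
      have := hle i' (le_of_lt hi')
      rwa [Function.update_of_ne (ne_of_lt hi') a z] at this
  rw [key, key, Finset.mul_sum]
  exact Finset.sum_congr rfl fun a _ => hc (Function.update z i a)

lemma div_ratio (a b c dd T : ℝ) (hT : T ≠ 0) (hb : b ≠ 0) (hd : dd ≠ 0) (hc : c ≠ 0) :
    (a / T) / (b / (T * dd) * c) = (a / b) / (c / dd) := by
  field_simp



theorem key_i {α : Type*} [Fintype α] [DecidableEq α] (m n : ℕ)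
    (Unf : (Fin m → Fin n → α) → ℝ) (hUnf : IsDist Unf)
    (col : Fin n → (Fin m → α) → ℝ) (hcol : ∀ j, IsDist (col j))
    (hprod : ∀ x, Unf x = ∏ j, col j (fun i => x i j))
    (W : Finset (Fin m → Fin n → α)) (hW : 0 < ∑ x ∈ W, Unf x)
    (E : Fin m → Fin n → Finset (Fin m → α))
    (δ : ℝ) (hδ : 0 < δ)
    (δm : Fin m → Fin n → ℝ) (hδm : ∀ i j, δ ≤ δm i j)
    (hcond : ∀ (i : Fin m) (j : Fin n) (z : Fin m → α),
      ∑ c ∈ (E i j).filter (fun c => ∀ i' : Fin m, i' ≤ i → c i' = z i'), col j c =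
        δm i j *
          ∑ c ∈ univ.filter (fun c : Fin m → α => ∀ i' : Fin m, i' ≤ i → c i' = z i'),
            col j c)
    (i : Fin m) :
    δ / 4 * ∑ x : Fin m → Fin n → α,
        (if x ∈ W then Unf x / ∑ z ∈ W, Unf z else 0) *
          ∑ j : Fin n,
            min |(∑ y ∈ W.filter (fun y =>
                    ((fun i' => y i' j) ∈ E i j) ∧ ∀ i' : Fin m, i' < i → y i' = x i'),
                  Unf y) /
                (δm i j *
                  ∑ y ∈ W.filter (fun y => ∀ i' : Fin m, i' < i → y i' = x i'), Unf y) -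
                1|
              (((∑ y ∈ W.filter (fun y =>
                    ((fun i' => y i' j) ∈ E i j) ∧ ∀ i' : Fin m, i' < i → y i' = x i'),
                  Unf y) /
                (δm i j *
                  ∑ y ∈ W.filter (fun y => ∀ i' : Fin m, i' < i → y i' = x i'), Unf y) -
                1) ^ 2) ≤
      ∑ x : Fin m → Fin n → α,
        (if x ∈ W then Unf x / ∑ z ∈ W, Unf z else 0) *
          Real.log
            (((∑ y ∈ W.filter (fun y =>
                  (∀ j : Fin n, y i j = x i j) ∧
                  (∀ j : Fin n,
                    ((fun i' => y i' j) ∈ E i j ↔ (fun i' => x i' j) ∈ E i j)) ∧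
                  ∀ i' : Fin m, i' < i → y i' = x i'), Unf y) /
               (∑ y ∈ W.filter (fun y => ∀ i' : Fin m, i' < i → y i' = x i'), Unf y)) /
             ((∑ y ∈ univ.filter (fun y : Fin m → Fin n → α =>
                  (∀ j : Fin n, y i j = x i j) ∧
                  (∀ j : Fin n,
                    ((fun i' => y i' j) ∈ E i j ↔ (fun i' => x i' j) ∈ E i j)) ∧
                  ∀ i' : Fin m, i' < i → y i' = x i'), Unf y) /
               (∑ y ∈ univ.filter (fun y : Fin m → Fin n → α =>
                  ∀ i' : Fin m, i' < i → y i' = x i'), Unf y))) := by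
  classical
  have hU0 : ∀ x, 0 ≤ Unf x := hUnf.1
  set T : ℝ := ∑ z ∈ W, Unf z with hT
  have hT0 : 0 < T := hW
  set p : (Fin m → Fin n → α) → ℝ := fun x => if x ∈ W then Unf x / T else 0 with hp
  set PA : (Fin m → Fin n → α) → ℝ :=
    fun x => ∑ y ∈ W.filter (fun y => ∀ i' : Fin m, i' < i → y i' = x i'), Unf y with hPA
  set QA : (Fin m → Fin n → α) → ℝ :=
    fun x => ∑ y ∈ univ.filter (fun y : Fin m → Fin n → α =>
      ∀ i' : Fin m, i' < i → y i' = x i'), Unf y with hQA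
  set PE : Fin n → (Fin m → Fin n → α) → ℝ :=
    fun j x => ∑ y ∈ W.filter (fun y =>
      ((fun i' => y i' j) ∈ E i j) ∧ ∀ i' : Fin m, i' < i → y i' = x i'), Unf y with hPE
  set PC : (Fin m → Fin n → α) → ℝ :=
    fun x => ∑ y ∈ W.filter (fun y =>
      (∀ j : Fin n, y i j = x i j) ∧
      (∀ j : Fin n, ((fun i' => y i' j) ∈ E i j ↔ (fun i' => x i' j) ∈ E i j)) ∧
      ∀ i' : Fin m, i' < i → y i' = x i'), Unf y with hPC
  set QC : (Fin m → Fin n → α) → ℝ :=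
    fun x => ∑ y ∈ univ.filter (fun y : Fin m → Fin n → α =>
      (∀ j : Fin n, y i j = x i j) ∧
      (∀ j : Fin n, ((fun i' => y i' j) ∈ E i j ↔ (fun i' => x i' j) ∈ E i j)) ∧
      ∀ i' : Fin m, i' < i → y i' = x i'), Unf y with hQC
  set ρf : Fin n → (Fin m → Fin n → α) → ℝ :=
    fun j x => PE j x / (δm i j * PA x) - 1 with hρf
  set lam : Fin n → (Fin m → Fin n → α) → ℝ := fun j x => min (ρf j x) 1 / 2 with hlam
  set Z : (Fin m → Fin n → α) → ℝ :=
    fun x => ∏ j, (1 + δm i j * (Real.exp (lam j x) - 1)) with hZ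
  set f : (Fin m → Fin n → α) → ℝ :=
    fun x => (∑ j, if (fun i' => x i' j) ∈ E i j then lam j x else 0) - Real.log (Z x) with hf
  set r : (Fin m → Fin n → α) → ℝ := fun x => PA x / (T * QA x) * Unf x with hr
  set K' : (Fin m → Fin n → α) → (Fin m → Fin n → Option α) :=
    fun x i' j => if i' < i then some (x i' j) else none with hK'
  set K : (Fin m → Fin n → α) →
      (Fin m → Fin n → Option α) × (Fin n → α) × (Fin n → Bool) :=
    fun x => (K' x, fun j => x i j, fun j => decide ((fun i' => x i' j) ∈ E i j)) with hK
  -- basic iffs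
  have hK'iff : ∀ x y : Fin m → Fin n → α,
      K' y = K' x ↔ ∀ i' : Fin m, i' < i → y i' = x i' := by
    intro x y
    constructor
    · intro h i' hi
      funext j
      have h2 := congrFun (congrFun h i') j
      simp only [hK', if_pos hi] at h2
      exact Option.some.inj h2
    · intro h
      funext i' j
      simp only [hK']
      by_cases hi : i' < i
      · simp only [if_pos hi, congrFun (h i' hi) j]
      · simp only [if_neg hi]
  have hKiff : ∀ x y : Fin m → Fin n → α,
      K y = K x ↔ ((∀ j : Fin n, y i j = x i j) ∧
        (∀ j : Fin n, ((fun i' => y i' j) ∈ E i j ↔ (fun i' => x i' j) ∈ E i j)) ∧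
        ∀ i' : Fin m, i' < i → y i' = x i') := by
    intro x y
    rw [hK]
    simp only [Prod.mk.injEq]
    rw [hK'iff x y]
    constructor
    · rintro ⟨h1, h2, h3⟩
      refine ⟨fun j => congrFun h2 j, fun j => ?_, h1⟩
      have := congrFun h3 j
      simpa [decide_eq_decide] using this
    · rintro ⟨h1, h2, h3⟩
      refine ⟨h3, funext h1, funext fun j => ?_⟩
      simpa [decide_eq_decide] using h2 j
  -- class constancy
  have hconst : ∀ x y : Fin m → Fin n → α, (∀ i' : Fin m, i' < i → y i' = x i') →
      PA y = PA x ∧ QA y = QA x ∧ (∀ j, PE j y = PE j x) := by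
    intro x y hy
    have hiff : ∀ z : Fin m → Fin n → α,
        (∀ i' : Fin m, i' < i → z i' = y i') ↔ (∀ i' : Fin m, i' < i → z i' = x i') :=
      fun z => ⟨fun h i' hi => (h i' hi).trans (hy i' hi),
        fun h i' hi => (h i' hi).trans (hy i' hi).symm⟩
    refine ⟨?_, ?_, fun j => ?_⟩
    · simp only [hPA]
      exact Finset.sum_congr (Finset.filter_congr fun z _ => by rw [hiff z]) fun _ _ => rfl
    · simp only [hQA]
      exact Finset.sum_congr (Finset.filter_congr fun z _ => by rw [hiff z]) fun _ _ => rfl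
    · simp only [hPE]
      exact Finset.sum_congr (Finset.filter_congr fun z _ => by rw [hiff z]) fun _ _ => rfl
  -- positivity of q's
  have hq0 : ∀ j, 0 < δm i j := fun j => lt_of_lt_of_le hδ (hδm i j)
  have hq1 : ∀ j, δm i j ≤ 1 := by
    intro j
    obtain ⟨c₀, hc₀⟩ : ∃ c, 0 < col j c := by
      by_contra h
      push_neg at h
      have h2 := Finset.sum_nonpos (fun c (_ : c ∈ (univ : Finset (Fin m → α))) => h c)
      rw [(hcol j).2] at h2
      linarith
    have hmem : c₀ ∈ univ.filter (fun c : Fin m → α => ∀ i' : Fin m, i' ≤ i → c i' = c₀ i') := by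
      simp
    have hu : 0 < ∑ c ∈ univ.filter (fun c : Fin m → α => ∀ i' : Fin m, i' ≤ i → c i' = c₀ i'),
        col j c :=
      lt_of_lt_of_le hc₀ (Finset.single_le_sum (fun c _ => (hcol j).1 c) hmem)
    have hsub := Finset.sum_le_sum_of_subset_of_nonneg
      (Finset.filter_subset_filter (fun c : Fin m → α => ∀ i' : Fin m, i' ≤ i → c i' = c₀ i') (Finset.subset_univ (E i j)))
      (fun c _ _ => (hcol j).1 c)
    rw [hcond i j c₀] at hsub
    nlinarith
  have hPA0 : ∀ x, 0 ≤ PA x := by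
    intro x
    simp only [hPA]
    exact Finset.sum_nonneg fun y _ => hU0 y
  have hQA0 : ∀ x, 0 ≤ QA x := by
    intro x
    simp only [hQA]
    exact Finset.sum_nonneg fun y _ => hU0 y
  have hPE0 : ∀ j x, 0 ≤ PE j x := by
    intro j x
    simp only [hPE]
    exact Finset.sum_nonneg fun y _ => hU0 y
  have hρge : ∀ j x, -1 ≤ ρf j x := by
    intro j x
    simp only [hρf]
    have : 0 ≤ PE j x / (δm i j * PA x) :=
      div_nonneg (hPE0 j x) (mul_nonneg (hq0 j).le (hPA0 x))
    linarith
  have hfactpos : ∀ j x, 0 < 1 + δm i j * (Real.exp (lam j x) - 1) := by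
    intro j x
    have h1 := hq0 j
    have h2 := hq1 j
    have h3 := Real.exp_pos (lam j x)
    nlinarith
  have hZpos : ∀ x, 0 < Z x := by
    intro x
    simp only [hZ]
    exact Finset.prod_pos fun j _ => hfactpos j x
  have hp0 : ∀ x, 0 ≤ p x := by
    intro x
    simp only [hp]
    split
    · exact div_nonneg (hU0 x) hT0.le
    · exact le_rfl
  have hr0 : ∀ x, 0 ≤ r x := by
    intro x
    simp only [hr]
    exact mul_nonneg (div_nonneg (hPA0 x) (mul_nonneg hT0.le (hQA0 x))) (hU0 x)
  have hpW : ∀ x, 0 < p x → x ∈ W ∧ 0 < Unf x := by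
    intro x hx
    simp only [hp] at hx
    by_cases h : x ∈ W
    · refine ⟨h, ?_⟩
      rw [if_pos h] at hx
      rcases lt_or_eq_of_le (hU0 x) with h2 | h2
      · exact h2
      · rw [← h2, zero_div] at hx
        linarith
    · rw [if_neg h] at hx
      linarith
  have hPApos : ∀ x, x ∈ W → 0 < Unf x → 0 < PA x := by
    intro x hxW hx
    have hmem : x ∈ W.filter (fun y => ∀ i' : Fin m, i' < i → y i' = x i') := by
      simp [hxW]
    calc (0:ℝ) < Unf x := hx
    _ ≤ PA x := by
        simp only [hPA]
        exact Finset.single_le_sum (fun y _ => hU0 y) hmem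
  have hQAge : ∀ x, PA x ≤ QA x := by
    intro x
    simp only [hPA, hQA]
    apply Finset.sum_le_sum_of_subset_of_nonneg
    · intro y hy
      rw [Finset.mem_filter] at hy ⊢
      exact ⟨Finset.mem_univ y, hy.2⟩
    · exact fun y _ _ => hU0 y
  have habs : ∀ x, 0 < p x → 0 < r x := by
    intro x hx
    obtain ⟨hxW, hUx⟩ := hpW x hx
    have h1 := hPApos x hxW hUx
    have h2 := lt_of_lt_of_le h1 (hQAge x)
    simp only [hr]
    positivity
  -- column factorization
  have hfact : ∀ (x₀ : Fin m → Fin n → α) (e : Fin n → ℝ),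
      ∑ y ∈ univ.filter (fun y : Fin m → Fin n → α => ∀ i' : Fin m, i' < i → y i' = x₀ i'),
          Unf y * ∏ j, (if (fun i' => y i' j) ∈ E i j then e j else 1)
        = ∏ j, ((∑ c ∈ univ.filter (fun c : Fin m → α =>
            ∀ i' : Fin m, i' < i → c i' = x₀ i' j), col j c) * (1 + δm i j * (e j - 1))) := by
    intro x₀ e
    have step1 : ∑ y ∈ univ.filter (fun y : Fin m → Fin n → α =>
        ∀ i' : Fin m, i' < i → y i' = x₀ i'),
        Unf y * ∏ j, (if (fun i' => y i' j) ∈ E i j then e j else 1)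
        = ∑ y : Fin m → Fin n → α, ∏ j,
          ((if ∀ i' : Fin m, i' < i → y i' j = x₀ i' j then (1:ℝ) else 0) *
            (col j (fun i' => y i' j) * (if (fun i' => y i' j) ∈ E i j then e j else 1))) := by
      rw [Finset.sum_filter]
      apply Finset.sum_congr rfl
      intro y _
      rw [Finset.prod_mul_distrib, Finset.prod_boole, Finset.prod_mul_distrib, ← hprod y]
      by_cases hcnd : ∀ i' : Fin m, i' < i → y i' = x₀ i'
      · rw [if_pos hcnd, if_pos, one_mul]
        intro j _ i' hi'
        exact congrFun (hcnd i' hi') j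
      · rw [if_neg hcnd, if_neg, zero_mul]
        intro hcc
        exact hcnd fun i' hi' => funext fun j => hcc j (Finset.mem_univ j) i' hi'
    rw [step1]
    calc ∑ y : Fin m → Fin n → α, ∏ j,
          ((if ∀ i' : Fin m, i' < i → y i' j = x₀ i' j then (1:ℝ) else 0) *
            (col j (fun i' => y i' j) * (if (fun i' => y i' j) ∈ E i j then e j else 1)))
        = ∏ j, ∑ c : Fin m → α,
            ((if ∀ i' : Fin m, i' < i → c i' = x₀ i' j then (1:ℝ) else 0) *
              (col j c * (if c ∈ E i j then e j else 1))) :=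
          sum_prod_cols m n (fun j c =>
            (if ∀ i' : Fin m, i' < i → c i' = x₀ i' j then (1:ℝ) else 0) *
              (col j c * (if c ∈ E i j then e j else 1)))
      _ = _ := by
          apply Finset.prod_congr rfl
          intro j _
          simp only [boole_mul]
          rw [← Finset.sum_filter]
          set s := univ.filter (fun c : Fin m → α => ∀ i' : Fin m, i' < i → c i' = x₀ i' j)
            with hs
          have hEfilter : s.filter (fun c => c ∈ E i j) =
              (E i j).filter (fun c => ∀ i' : Fin m, i' < i → c i' = x₀ i' j) := by
            ext c
            simp only [hs, Finset.mem_filter, Finset.mem_univ, true_and]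
            tauto
          have hsplitsum := Finset.sum_filter_add_sum_filter_not s (fun c => c ∈ E i j)
            (col j)
          have hcondlt := cond_lt i (E i j) (col j) (δm i j) (hcond i j)
            (fun i' => x₀ i' j)
          rw [hEfilter, hcondlt] at hsplitsum
          calc ∑ c ∈ s, col j c * (if c ∈ E i j then e j else 1)
              = ∑ c ∈ s, (if c ∈ E i j then col j c * e j else col j c) := by
                apply Finset.sum_congr rfl
                intro c _
                split <;> ring
            _ = (∑ c ∈ s.filter (fun c => c ∈ E i j), col j c * e j) +
                ∑ c ∈ s.filter (fun c => ¬ c ∈ E i j), col j c := Finset.sum_ite _ _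
            _ = (∑ c ∈ s.filter (fun c => c ∈ E i j), col j c) * e j +
                ∑ c ∈ s.filter (fun c => ¬ c ∈ E i j), col j c := by
                rw [Finset.sum_mul]
            _ = _ := by
                rw [hEfilter, hcondlt]
                have : ∑ c ∈ s.filter (fun c => ¬ c ∈ E i j), col j c =
                    (∑ c ∈ s, col j c) - δm i j * ∑ c ∈ s, col j c := by
                  linarith [hsplitsum]
                rw [this, hs]
                ring
  have hQAprod : ∀ x₀ : Fin m → Fin n → α,
      QA x₀ = ∏ j, ∑ c ∈ univ.filter (fun c : Fin m → α =>
        ∀ i' : Fin m, i' < i → c i' = x₀ i' j), col j c := by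
    intro x₀
    have h := hfact x₀ (fun _ => 1)
    simp only [ite_self, Finset.prod_const_one, mul_one, sub_self, mul_zero, add_zero] at h
    rw [hQA]
    exact h
  have hFZ : ∀ x₀ : Fin m → Fin n → α,
      ∑ y ∈ univ.filter (fun y : Fin m → Fin n → α => ∀ i' : Fin m, i' < i → y i' = x₀ i'),
          Unf y * ∏ j, (if (fun i' => y i' j) ∈ E i j then Real.exp (lam j x₀) else 1)
        = QA x₀ * Z x₀ := by
    intro x₀
    rw [hfact x₀ (fun j => Real.exp (lam j x₀)), hQAprod x₀, hZ, ← Finset.prod_mul_distrib]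
  -- helper sums over a prefix class
  have hfilteq : ∀ (k : Fin m → Fin n → Option α) (x₀ : Fin m → Fin n → α), K' x₀ = k →
      univ.filter (fun x : Fin m → Fin n → α => K' x = k)
        = univ.filter (fun y : Fin m → Fin n → α => ∀ i' : Fin m, i' < i → y i' = x₀ i') := by
    intro k x₀ hk
    ext y
    simp only [Finset.mem_filter, Finset.mem_univ, true_and]
    rw [← hk, hK'iff x₀ y]
  have hsumP : ∀ x₀ : Fin m → Fin n → α,
      ∑ y ∈ univ.filter (fun y : Fin m → Fin n → α => ∀ i' : Fin m, i' < i → y i' = x₀ i'),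
        p y = PA x₀ / T := by
    intro x₀
    have h1 : ∑ y ∈ univ.filter (fun y : Fin m → Fin n → α =>
        ∀ i' : Fin m, i' < i → y i' = x₀ i'), p y
        = ∑ y ∈ (univ.filter (fun y : Fin m → Fin n → α =>
            ∀ i' : Fin m, i' < i → y i' = x₀ i')).filter (fun y => y ∈ W), Unf y / T := by
      conv_rhs => rw [Finset.sum_filter]
    rw [h1]
    have h2 : (univ.filter (fun y : Fin m → Fin n → α =>
          ∀ i' : Fin m, i' < i → y i' = x₀ i')).filter (fun y => y ∈ W)
        = W.filter (fun y => ∀ i' : Fin m, i' < i → y i' = x₀ i') := by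
      ext y
      simp only [Finset.mem_filter, Finset.mem_univ, true_and]
      tauto
    rw [h2, hPA, ← Finset.sum_div]
  have hsumPE : ∀ (x₀ : Fin m → Fin n → α) (j : Fin n),
      ∑ y ∈ univ.filter (fun y : Fin m → Fin n → α => ∀ i' : Fin m, i' < i → y i' = x₀ i'),
        p y * (if (fun i' => y i' j) ∈ E i j then (1:ℝ) else 0) = PE j x₀ / T := by
    intro x₀ j
    have h1 : ∀ y : Fin m → Fin n → α,
        p y * (if (fun i' => y i' j) ∈ E i j then (1:ℝ) else 0)
        = if y ∈ W ∧ (fun i' => y i' j) ∈ E i j then Unf y / T else 0 := by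
      intro y
      simp only [hp]
      by_cases h2 : y ∈ W <;> by_cases h3 : (fun i' => y i' j) ∈ E i j <;>
        simp [h2, h3]
    calc ∑ y ∈ univ.filter (fun y : Fin m → Fin n → α =>
          ∀ i' : Fin m, i' < i → y i' = x₀ i'),
          p y * (if (fun i' => y i' j) ∈ E i j then (1:ℝ) else 0)
        = ∑ y ∈ (univ.filter (fun y : Fin m → Fin n → α =>
            ∀ i' : Fin m, i' < i → y i' = x₀ i')).filter
              (fun y => y ∈ W ∧ (fun i' => y i' j) ∈ E i j), Unf y / T := by
          conv_rhs => rw [Finset.sum_filter]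
          exact Finset.sum_congr rfl fun y _ => h1 y
      _ = ∑ y ∈ W.filter (fun y =>
            ((fun i' => y i' j) ∈ E i j) ∧ ∀ i' : Fin m, i' < i → y i' = x₀ i'), Unf y / T := by
          apply Finset.sum_congr _ fun _ _ => rfl
          ext y
          simp only [Finset.mem_filter, Finset.mem_univ, true_and]
          tauto
      _ = PE j x₀ / T := by rw [hPE, ← Finset.sum_div]
  have hlamconst : ∀ (x₀ y : Fin m → Fin n → α), (∀ i' : Fin m, i' < i → y i' = x₀ i') →
      (∀ j, lam j y = lam j x₀) ∧ Z y = Z x₀ := by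
    intro x₀ y hy
    obtain ⟨hPAy, _, hPEy⟩ := hconst x₀ y hy
    have h1 : ∀ j, lam j y = lam j x₀ := fun j => by
      simp only [hlam, hρf, hPAy, hPEy j]
    exact ⟨h1, by simp only [hZ]; exact Finset.prod_congr rfl fun j _ => by rw [h1 j]⟩
  -- step C
  have hC : ∑ x, r x * Real.exp (f x) = ∑ x, p x := by
    rw [← Finset.sum_fiberwise univ K' (fun x => r x * Real.exp (f x)),
      ← Finset.sum_fiberwise univ K' p]
    apply Finset.sum_congr rfl
    intro k _
    rcases Finset.eq_empty_or_nonempty (univ.filter fun x : Fin m → Fin n → α => K' x = k)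
      with he | ⟨x₀, hx₀⟩
    · rw [he]
      simp
    have hk : K' x₀ = k := by
      have := Finset.mem_filter.mp hx₀
      exact this.2
    rw [hfilteq k x₀ hk, hsumP x₀]
    by_cases hQAc : QA x₀ = 0
    · have hPAc : PA x₀ = 0 := le_antisymm (hQAc ▸ hQAge x₀) (hPA0 x₀)
      rw [hPAc, zero_div]
      apply Finset.sum_eq_zero
      intro y hy
      have hy' : ∀ i' : Fin m, i' < i → y i' = x₀ i' := (Finset.mem_filter.mp hy).2
      have hQAy : QA y = 0 := by rw [(hconst x₀ y hy').2.1, hQAc]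
      simp only [hr, hQAy, mul_zero, div_zero, zero_mul]
    · have hQApos : 0 < QA x₀ := lt_of_le_of_ne (hQA0 x₀) (Ne.symm hQAc)
      have hZp := hZpos x₀
      have hLHS : ∑ y ∈ univ.filter (fun y : Fin m → Fin n → α =>
            ∀ i' : Fin m, i' < i → y i' = x₀ i'), r y * Real.exp (f y)
          = PA x₀ / (T * QA x₀ * Z x₀) *
            ∑ y ∈ univ.filter (fun y : Fin m → Fin n → α =>
              ∀ i' : Fin m, i' < i → y i' = x₀ i'),
              Unf y * ∏ j, (if (fun i' => y i' j) ∈ E i j then Real.exp (lam j x₀) else 1) := by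
        rw [Finset.mul_sum]
        apply Finset.sum_congr rfl
        intro y hy
        have hy' : ∀ i' : Fin m, i' < i → y i' = x₀ i' := (Finset.mem_filter.mp hy).2
        obtain ⟨hPAy, hQAy, _⟩ := hconst x₀ y hy'
        obtain ⟨hlamy, hZy⟩ := hlamconst x₀ y hy'
        have hexpf : Real.exp (f y) =
            (∏ j, (if (fun i' => y i' j) ∈ E i j then Real.exp (lam j x₀) else 1)) / Z x₀ := by
          simp only [hf]
          rw [Real.exp_sub, Real.exp_log (hZpos y), hZy, Real.exp_sum]
          congr 1
          apply Finset.prod_congr rfl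
          intro j _
          rw [apply_ite Real.exp, Real.exp_zero, hlamy j]
        rw [hexpf]
        simp only [hr, hPAy, hQAy]
        field_simp
      rw [hLHS, hFZ x₀]
      field_simp
  -- step D
  have hD : δ / 4 * ∑ x, p x * ∑ j, min |ρf j x| ((ρf j x) ^ 2) ≤ ∑ x, p x * f x := by
    rw [← sub_nonneg]
    have hsplit : ∑ x, p x * f x - δ / 4 * ∑ x, p x * ∑ j, min |ρf j x| ((ρf j x) ^ 2)
        = ∑ x, (p x * f x - δ / 4 * (p x * ∑ j, min |ρf j x| ((ρf j x) ^ 2))) := by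
      rw [Finset.sum_sub_distrib, ← Finset.mul_sum]
    rw [hsplit, ← Finset.sum_fiberwise univ K'
      (fun x => p x * f x - δ / 4 * (p x * ∑ j, min |ρf j x| ((ρf j x) ^ 2)))]
    apply Finset.sum_nonneg
    intro k _
    rcases Finset.eq_empty_or_nonempty (univ.filter fun x : Fin m → Fin n → α => K' x = k)
      with he | ⟨x₀, hx₀⟩
    · rw [he]
      simp
    have hk : K' x₀ = k := (Finset.mem_filter.mp hx₀).2
    rw [hfilteq k x₀ hk]
    by_cases hPAc : PA x₀ = 0
    · apply Finset.sum_nonneg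
      intro y hy
      have hy' : ∀ i' : Fin m, i' < i → y i' = x₀ i' := (Finset.mem_filter.mp hy).2
      have hpy : p y = 0 := by
        simp only [hp]
        by_cases h2 : y ∈ W
        · rw [if_pos h2]
          have hmem : y ∈ W.filter (fun z => ∀ i' : Fin m, i' < i → z i' = x₀ i') := by
            rw [Finset.mem_filter]
            exact ⟨h2, hy'⟩
          have h3 : Unf y ≤ PA x₀ := by
            rw [hPA]
            exact Finset.single_le_sum (fun z _ => hU0 z) hmem
          have h4 : Unf y = 0 := le_antisymm (hPAc ▸ h3) (hU0 y)
          rw [h4, zero_div]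
        · rw [if_neg h2]
      rw [hpy]
      simp
    · have hPApos' : 0 < PA x₀ := lt_of_le_of_ne (hPA0 x₀) (Ne.symm hPAc)
      -- compute both sums over the class
      have hA1 : ∑ y ∈ univ.filter (fun y : Fin m → Fin n → α =>
            ∀ i' : Fin m, i' < i → y i' = x₀ i'), p y * f y
          = (∑ j, lam j x₀ * (PE j x₀ / T)) - Real.log (Z x₀) * (PA x₀ / T) := by
        have hterm : ∀ y ∈ univ.filter (fun y : Fin m → Fin n → α =>
            ∀ i' : Fin m, i' < i → y i' = x₀ i'),
            p y * f y = (∑ j, lam j x₀ *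
              (p y * (if (fun i' => y i' j) ∈ E i j then (1:ℝ) else 0)))
              - Real.log (Z x₀) * p y := by
          intro y hy
          have hy' : ∀ i' : Fin m, i' < i → y i' = x₀ i' := (Finset.mem_filter.mp hy).2
          obtain ⟨hlamy, hZy⟩ := hlamconst x₀ y hy'
          simp only [hf, hZy]
          rw [mul_sub, Finset.mul_sum]
          congr 1
          · apply Finset.sum_congr rfl
            intro j _
            rw [hlamy j]
            split <;> ring
          · ring
        rw [Finset.sum_congr rfl hterm, Finset.sum_sub_distrib]
        congr 1
        · rw [Finset.sum_comm]
          apply Finset.sum_congr rfl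
          intro j _
          rw [← Finset.mul_sum, hsumPE x₀ j]
        · rw [← Finset.mul_sum, hsumP x₀]
      have hA2 : ∑ y ∈ univ.filter (fun y : Fin m → Fin n → α =>
            ∀ i' : Fin m, i' < i → y i' = x₀ i'),
            p y * ∑ j, min |ρf j y| ((ρf j y) ^ 2)
          = (PA x₀ / T) * ∑ j, min |ρf j x₀| ((ρf j x₀) ^ 2) := by
        have hterm : ∀ y ∈ univ.filter (fun y : Fin m → Fin n → α =>
            ∀ i' : Fin m, i' < i → y i' = x₀ i'),
            p y * ∑ j, min |ρf j y| ((ρf j y) ^ 2)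
              = p y * ∑ j, min |ρf j x₀| ((ρf j x₀) ^ 2) := by
          intro y hy
          have hy' : ∀ i' : Fin m, i' < i → y i' = x₀ i' := (Finset.mem_filter.mp hy).2
          obtain ⟨hPAy, _, hPEy⟩ := hconst x₀ y hy'
          congr 1
          apply Finset.sum_congr rfl
          intro j _
          simp only [hρf, hPAy, hPEy j]
        rw [Finset.sum_congr rfl hterm, ← Finset.sum_mul, hsumP x₀, mul_comm]
      have hsum_eq : ∑ y ∈ univ.filter (fun y : Fin m → Fin n → α =>
            ∀ i' : Fin m, i' < i → y i' = x₀ i'),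
          (p y * f y - δ / 4 * (p y * ∑ j, min |ρf j y| ((ρf j y) ^ 2)))
          = ((∑ j, lam j x₀ * (PE j x₀ / T)) - Real.log (Z x₀) * (PA x₀ / T))
            - δ / 4 * ((PA x₀ / T) * ∑ j, min |ρf j x₀| ((ρf j x₀) ^ 2)) := by
        rw [Finset.sum_sub_distrib, hA1, ← Finset.mul_sum, hA2]
      rw [hsum_eq]
      have hlogZ : Real.log (Z x₀) = ∑ j, Real.log (1 + δm i j * (Real.exp (lam j x₀) - 1)) := by
        rw [hZ]
        exact Real.log_prod fun j _ => (hfactpos j x₀).ne'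
      have hperj : ∀ j : Fin n,
          δ / 4 * ((PA x₀ / T) * min |ρf j x₀| ((ρf j x₀) ^ 2)) +
            (PA x₀ / T) * Real.log (1 + δm i j * (Real.exp (lam j x₀) - 1))
            ≤ lam j x₀ * (PE j x₀ / T) := by
        intro j
        have hppq : PE j x₀ / (δm i j * PA x₀) - 1 = (PE j x₀ / PA x₀) / δm i j - 1 := by
          rw [div_div, mul_comm]
        have hρeq : ρf j x₀ = (PE j x₀ / PA x₀) / δm i j - 1 := by
          rw [hρf]
          exact hppq
        have hsm := scalar_main (q := δm i j) (pp := PE j x₀ / PA x₀) hδ (hδm i j) (hq1 j)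
          (div_nonneg (hPE0 j x₀) (hPA0 x₀))
        rw [← hρeq] at hsm
        have hlameq : lam j x₀ = min (ρf j x₀) 1 / 2 := by rw [hlam]
        rw [← hlameq] at hsm
        have hPAT : 0 ≤ PA x₀ / T := div_nonneg (hPA0 x₀) hT0.le
        have := mul_le_mul_of_nonneg_left hsm hPAT
        have hpp : PA x₀ / T * (PE j x₀ / PA x₀) = PE j x₀ / T := by
          field_simp
        calc δ / 4 * ((PA x₀ / T) * min |ρf j x₀| ((ρf j x₀) ^ 2)) +
              (PA x₀ / T) * Real.log (1 + δm i j * (Real.exp (lam j x₀) - 1))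
            = PA x₀ / T * (δ * min |ρf j x₀| ((ρf j x₀) ^ 2) / 4) +
              (PA x₀ / T) * Real.log (1 + δm i j * (Real.exp (lam j x₀) - 1)) := by ring
          _ ≤ PA x₀ / T * (PE j x₀ / PA x₀ * lam j x₀ -
                Real.log (1 + δm i j * (Real.exp (lam j x₀) - 1))) +
              (PA x₀ / T) * Real.log (1 + δm i j * (Real.exp (lam j x₀) - 1)) := by
              linarith [this]
          _ = (PA x₀ / T * (PE j x₀ / PA x₀)) * lam j x₀ := by ring
          _ = lam j x₀ * (PE j x₀ / T) := by rw [hpp]; ring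
      have hsumj := Finset.sum_le_sum (fun j (_ : j ∈ (univ : Finset (Fin n))) => hperj j)
      rw [Finset.sum_add_distrib, ← Finset.mul_sum, ← Finset.mul_sum, ← Finset.mul_sum] at hsumj
      rw [hlogZ]
      linarith [hsumj]
  -- step B
  have hB : ∑ x, (p x * f x + p x - r x * Real.exp (f x)) ≤
      ∑ x, p x * Real.log ((∑ y ∈ univ.filter fun y => K y = K x, p y) /
        (∑ y ∈ univ.filter fun y => K y = K x, r y)) := by
    apply dv_bound p r f hp0 hr0 habs K
    intro x y hKxy
    obtain ⟨h1, h2, h3⟩ := (hKiff y x).mp hKxy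
    obtain ⟨hlame, hZe⟩ := hlamconst y x h3
    simp only [hf, hZe]
    congr 1
    apply Finset.sum_congr rfl
    intro j _
    rw [hlame j]
    exact if_congr (h2 j) rfl rfl
  -- step A
  have hA : ∑ x, p x * Real.log ((∑ y ∈ univ.filter fun y => K y = K x, p y) /
        (∑ y ∈ univ.filter fun y => K y = K x, r y)) =
      ∑ x, p x * Real.log ((PC x / PA x) / (QC x / QA x)) := by
    apply Finset.sum_congr rfl
    intro x _
    rcases eq_or_lt_of_le (hp0 x) with h0 | hpx
    · rw [← h0, zero_mul, zero_mul]
    obtain ⟨hxW, hUx⟩ := hpW x hpx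
    have hcellx : x ∈ W.filter (fun y =>
        (∀ j : Fin n, y i j = x i j) ∧
        (∀ j : Fin n, ((fun i' => y i' j) ∈ E i j ↔ (fun i' => x i' j) ∈ E i j)) ∧
        ∀ i' : Fin m, i' < i → y i' = x i') := by
      rw [Finset.mem_filter]
      exact ⟨hxW, fun j => rfl, fun j => Iff.rfl, fun i' _ => rfl⟩
    have hPCpos : 0 < PC x := by
      calc (0:ℝ) < Unf x := hUx
      _ ≤ PC x := by
          rw [hPC]
          exact Finset.single_le_sum (fun y _ => hU0 y) hcellx
    have hQCpos : 0 < QC x := by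
      calc (0:ℝ) < PC x := hPCpos
      _ ≤ QC x := by
          rw [hPC, hQC]
          apply Finset.sum_le_sum_of_subset_of_nonneg
          · intro y hy
            rw [Finset.mem_filter] at hy ⊢
            exact ⟨Finset.mem_univ y, hy.2⟩
          · exact fun y _ _ => hU0 y
    have hPApos2 : 0 < PA x := hPApos x hxW hUx
    have hQApos2 : 0 < QA x := lt_of_lt_of_le hPApos2 (hQAge x)
    have hSp : ∑ y ∈ univ.filter (fun y => K y = K x), p y = PC x / T := by
      have h1 : ∑ y ∈ univ.filter (fun y : Fin m → Fin n → α => K y = K x), p y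
          = ∑ y ∈ (univ.filter (fun y : Fin m → Fin n → α => K y = K x)).filter
              (fun y => y ∈ W), Unf y / T := by
        conv_rhs => rw [Finset.sum_filter]
      rw [h1]
      have h2 : (univ.filter (fun y : Fin m → Fin n → α => K y = K x)).filter
            (fun y => y ∈ W)
          = W.filter (fun y =>
              (∀ j : Fin n, y i j = x i j) ∧
              (∀ j : Fin n, ((fun i' => y i' j) ∈ E i j ↔ (fun i' => x i' j) ∈ E i j)) ∧
              ∀ i' : Fin m, i' < i → y i' = x i') := by
        ext y
        simp only [Finset.mem_filter, Finset.mem_univ, true_and]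
        rw [hKiff x y]
        tauto
      rw [h2, hPC, ← Finset.sum_div]
    have hQCsum : ∑ y ∈ univ.filter (fun y : Fin m → Fin n → α => K y = K x), Unf y
        = QC x := by
      rw [hQC]
      apply Finset.sum_congr _ fun _ _ => rfl
      apply Finset.filter_congr
      intro y _
      rw [hKiff x y]
    have hSr : ∑ y ∈ univ.filter (fun y => K y = K x), r y
        = PA x / (T * QA x) * QC x := by
      have h1 : ∀ y ∈ univ.filter (fun y : Fin m → Fin n → α => K y = K x),
          r y = PA x / (T * QA x) * Unf y := by
        intro y hy
        have h2 := ((hKiff x y).mp (Finset.mem_filter.mp hy).2).2.2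
        obtain ⟨hPAy, hQAy, _⟩ := hconst x y h2
        simp only [hr, hPAy, hQAy]
      rw [Finset.sum_congr rfl h1, ← Finset.mul_sum, hQCsum]
    rw [hSp, hSr]
    congr 1
    exact congrArg Real.log (div_ratio (PC x) (PA x) (QC x) (QA x) T hT0.ne' hPApos2.ne' hQApos2.ne' hQCpos.ne')
  -- assemble
  have goal_eq : (δ / 4 * ∑ x : Fin m → Fin n → α,
      p x * ∑ j : Fin n, min |ρf j x| ((ρf j x) ^ 2) : ℝ) =
      δ / 4 * ∑ x : Fin m → Fin n → α,
        (if x ∈ W then Unf x / T else 0) *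
          ∑ j : Fin n,
            min |(PE j x) / (δm i j * PA x) - 1| (((PE j x) / (δm i j * PA x) - 1) ^ 2) := by
    rfl
  have hmid : ∑ x, p x * f x ≤
      ∑ x, (p x * f x + p x - r x * Real.exp (f x)) := by
    apply le_of_eq
    rw [Finset.sum_sub_distrib, Finset.sum_add_distrib, hC]
    ring
  calc δ / 4 * ∑ x : Fin m → Fin n → α,
      (if x ∈ W then Unf x / T else 0) *
        ∑ j : Fin n,
          min |(∑ y ∈ W.filter (fun y =>
                  ((fun i' => y i' j) ∈ E i j) ∧ ∀ i' : Fin m, i' < i → y i' = x i'),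
                Unf y) /
              (δm i j *
                ∑ y ∈ W.filter (fun y => ∀ i' : Fin m, i' < i → y i' = x i'), Unf y) -
              1|
            (((∑ y ∈ W.filter (fun y =>
                  ((fun i' => y i' j) ∈ E i j) ∧ ∀ i' : Fin m, i' < i → y i' = x i'),
                Unf y) /
              (δm i j *
                ∑ y ∈ W.filter (fun y => ∀ i' : Fin m, i' < i → y i' = x i'), Unf y) -
              1) ^ 2)
      = δ / 4 * ∑ x, p x * ∑ j, min |ρf j x| ((ρf j x) ^ 2) := rfl
    _ ≤ ∑ x, p x * f x := hD
    _ ≤ ∑ x, (p x * f x + p x - r x * Real.exp (f x)) := hmid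
    _ ≤ ∑ x, p x * Real.log ((∑ y ∈ univ.filter fun y => K y = K x, p y) /
          (∑ y ∈ univ.filter fun y => K y = K x, r y)) := hB
    _ = ∑ x, p x * Real.log ((PC x / PA x) / (QC x / QA x)) := hA
    _ = _ := rfl

/-- Let `Unf` be a column-independent distribution over `m × n` matrices
(`hprod` with column distributions `col j`), `W` an event with `Unf[W] > 0`, and
`Idl = Unf | W`. The events `E i j` are determined by column `j` and satisfy
`Unf[E i j | X_{≤i,j}] = δm i j ≥ δ` for every fixing of the first `i+1` entries
of column `j` (`hcond`). With
`ρ_{i,j}(x_{<i}) = Idl[E i j | X_{<i} = x_{<i}] / δm i j − 1` and `d` the sum of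
conditional divergences `∑ᵢ D(Idl_{Xᵢ Yᵢ} || Unf_{Xᵢ Yᵢ} | Idl_{X_{<i}})`
(written as expectations over `x ~ Idl` of log-ratios of conditional
probabilities, where `Yᵢⱼ` indicates `E i j`), we have
`E_{Idl}[∑ᵢ∑ⱼ min(|ρ_{i,j}|, ρ_{i,j}²)] ≤ 4 d / δ`. -/
theorem rho_bound {α : Type*} [Fintype α] [DecidableEq α] (m n : ℕ)
    (Unf : (Fin m → Fin n → α) → ℝ) (hUnf : IsDist Unf)
    (col : Fin n → (Fin m → α) → ℝ) (hcol : ∀ j, IsDist (col j))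
    (hprod : ∀ x, Unf x = ∏ j, col j (fun i => x i j))
    (W : Finset (Fin m → Fin n → α)) (hW : 0 < ∑ x ∈ W, Unf x)
    (E : Fin m → Fin n → Finset (Fin m → α))
    (δ : ℝ) (hδ : 0 < δ)
    (δm : Fin m → Fin n → ℝ) (hδm : ∀ i j, δ ≤ δm i j)
    (hcond : ∀ (i : Fin m) (j : Fin n) (z : Fin m → α),
      ∑ c ∈ (E i j).filter (fun c => ∀ i' : Fin m, i' ≤ i → c i' = z i'), col j c =
        δm i j *
          ∑ c ∈ univ.filter (fun c : Fin m → α => ∀ i' : Fin m, i' ≤ i → c i' = z i'),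
            col j c)
    (d : ℝ)
    (hd : d = ∑ i : Fin m, ∑ x : Fin m → Fin n → α,
        (if x ∈ W then Unf x / ∑ z ∈ W, Unf z else 0) *
          Real.log
            (((∑ y ∈ W.filter (fun y =>
                  (∀ j : Fin n, y i j = x i j) ∧
                  (∀ j : Fin n,
                    ((fun i' => y i' j) ∈ E i j ↔ (fun i' => x i' j) ∈ E i j)) ∧
                  ∀ i' : Fin m, i' < i → y i' = x i'), Unf y) /
               (∑ y ∈ W.filter (fun y => ∀ i' : Fin m, i' < i → y i' = x i'), Unf y)) /
             ((∑ y ∈ univ.filter (fun y : Fin m → Fin n → α =>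
                  (∀ j : Fin n, y i j = x i j) ∧
                  (∀ j : Fin n,
                    ((fun i' => y i' j) ∈ E i j ↔ (fun i' => x i' j) ∈ E i j)) ∧
                  ∀ i' : Fin m, i' < i → y i' = x i'), Unf y) /
               (∑ y ∈ univ.filter (fun y : Fin m → Fin n → α =>
                  ∀ i' : Fin m, i' < i → y i' = x i'), Unf y)))) :
    ∑ x : Fin m → Fin n → α,
        (if x ∈ W then Unf x / ∑ z ∈ W, Unf z else 0) *
          ∑ i : Fin m, ∑ j : Fin n,
            (fun ρ => min |ρ| (ρ ^ 2))
              ((∑ y ∈ W.filter (fun y =>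
                    ((fun i' => y i' j) ∈ E i j) ∧ ∀ i' : Fin m, i' < i → y i' = x i'),
                  Unf y) /
                (δm i j *
                  ∑ y ∈ W.filter (fun y => ∀ i' : Fin m, i' < i → y i' = x i'), Unf y) -
                1) ≤
      4 * d / δ := by
  have key : ∀ i : Fin m, _ := fun i =>
    key_i m n Unf hUnf col hcol hprod W hW E δ hδ δm hδm hcond i
  rw [hd]
  calc ∑ x : Fin m → Fin n → α,
        (if x ∈ W then Unf x / ∑ z ∈ W, Unf z else 0) *
          ∑ i : Fin m, ∑ j : Fin n,
            (fun ρ => min |ρ| (ρ ^ 2))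
              ((∑ y ∈ W.filter (fun y =>
                    ((fun i' => y i' j) ∈ E i j) ∧ ∀ i' : Fin m, i' < i → y i' = x i'),
                  Unf y) /
                (δm i j *
                  ∑ y ∈ W.filter (fun y => ∀ i' : Fin m, i' < i → y i' = x i'), Unf y) -
                1)
      = ∑ i : Fin m, ∑ x : Fin m → Fin n → α,
        (if x ∈ W then Unf x / ∑ z ∈ W, Unf z else 0) *
          ∑ j : Fin n,
            min |(∑ y ∈ W.filter (fun y =>
                    ((fun i' => y i' j) ∈ E i j) ∧ ∀ i' : Fin m, i' < i → y i' = x i'),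
                  Unf y) /
                (δm i j *
                  ∑ y ∈ W.filter (fun y => ∀ i' : Fin m, i' < i → y i' = x i'), Unf y) -
                1|
              (((∑ y ∈ W.filter (fun y =>
                    ((fun i' => y i' j) ∈ E i j) ∧ ∀ i' : Fin m, i' < i → y i' = x i'),
                  Unf y) /
                (δm i j *
                  ∑ y ∈ W.filter (fun y => ∀ i' : Fin m, i' < i → y i' = x i'), Unf y) -
                1) ^ 2) := by
        simp only [Finset.mul_sum]
        exact Finset.sum_comm
    _ ≤ ∑ i : Fin m, 4 * (∑ x : Fin m → Fin n → α,
        (if x ∈ W then Unf x / ∑ z ∈ W, Unf z else 0) *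
          Real.log
            (((∑ y ∈ W.filter (fun y =>
                  (∀ j : Fin n, y i j = x i j) ∧
                  (∀ j : Fin n,
                    ((fun i' => y i' j) ∈ E i j ↔ (fun i' => x i' j) ∈ E i j)) ∧
                  ∀ i' : Fin m, i' < i → y i' = x i'), Unf y) /
               (∑ y ∈ W.filter (fun y => ∀ i' : Fin m, i' < i → y i' = x i'), Unf y)) /
             ((∑ y ∈ univ.filter (fun y : Fin m → Fin n → α =>
                  (∀ j : Fin n, y i j = x i j) ∧
                  (∀ j : Fin n,
                    ((fun i' => y i' j) ∈ E i j ↔ (fun i' => x i' j) ∈ E i j)) ∧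
                  ∀ i' : Fin m, i' < i → y i' = x i'), Unf y) /
               (∑ y ∈ univ.filter (fun y : Fin m → Fin n → α =>
                  ∀ i' : Fin m, i' < i → y i' = x i'), Unf y)))) / δ := by
        apply Finset.sum_le_sum
        intro i _
        rw [le_div_iff₀ hδ]
        linarith [key i]
    _ = _ := by rw [← Finset.sum_div, ← Finset.mul_sum]
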